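/- Let R be a commutative ring, G a finite p-group, φ : G → R^× a group homomorphism, and suppose R is an integral domain in which p is not invertible. Then R_φ is a direct summand of a permutation RG-module if and only if φ is trivial. -/

import Mathlib

/-- The ideal `I^φ_H = {r ∈ R : (1 - φ(h))·r = 0 for all h ∈ H}`, the annihilator of
`{1 - φ(h) : h ∈ H}`. -/
def Iphi {R : Type*} [CommRing R] {G : Type*} [Group G] (φ : G →* Rˣ) (H : Subgroup G) :
    Ideal R where
  carrier := {r : R | ∀ h ∈ H, (1 - ((φ h : Rˣ) : R)) * r = 0}
  add_mem' := by
    intro a b ha hb h hh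
    rw [mul_add, ha h hh, hb h hh, add_zero]
  zero_mem' := by intro h hh; rw [mul_zero]
  smul_mem' := by
    intro c r hr h hh
    simp only [smul_eq_mul]
    rw [mul_comm c r, ← mul_assoc, hr h hh, zero_mul]

/-- `R_φ` is a direct summand of a permutation `RG`-module: there are finitely many
subgroups `H i` of `G`, `RG`-module maps `f i : R_φ → R(G/H i)` (encoded by the images
`x i` of `1 ∈ R_φ`, which must be `φ`-semi-invariant) and `RG`-module maps
`g i : R(G/H i) → R_φ` (i.e. `R`-linear maps satisfying `g (s • m) = φ(s)·g m`) whose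
composite `∑ i, g i ∘ f i` is the identity of `R_φ`. -/
def IsPermSummand (R : Type*) [CommRing R] (G : Type*) [Group G] (φ : G →* Rˣ) : Prop :=
  ∃ (n : ℕ) (Hs : Fin n → Subgroup G)
    (x : ∀ i, (G ⧸ Hs i) →₀ R)
    (g : ∀ i, ((G ⧸ Hs i) →₀ R) →ₗ[R] R),
    (∀ i (s : G), ((Representation.ofMulAction R G (G ⧸ Hs i)) s (MonoidAlgebra.ofCoeff (x i))).coeff = ((φ s : Rˣ) : R) • x i) ∧
    (∀ i (s : G) (m : (G ⧸ Hs i) →₀ R),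
      g i (((Representation.ofMulAction R G (G ⧸ Hs i)) s (MonoidAlgebra.ofCoeff m)).coeff) = ((φ s : Rˣ) : R) * g i m) ∧
    (∑ i, g i (x i)) = 1

section Helpers

variable {R : Type*} [CommRing R] {G : Type*} [Group G]

/-- Semi-invariance of coefficients: `φ(s) · x(sH) = x(H)`. -/
lemma coeff_semiinv (φ : G →* Rˣ) (H : Subgroup G) (x : (G ⧸ H) →₀ R)
    (hx : ∀ s : G, ((Representation.ofMulAction R G (G ⧸ H)) s (MonoidAlgebra.ofCoeff x)).coeff = ((φ s : Rˣ) : R) • x)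
    (s : G) :
    ((φ s : Rˣ) : R) * x (QuotientGroup.mk s) = x (QuotientGroup.mk 1) := by
  have h := congrArg (fun f : (G ⧸ H) →₀ R => f (QuotientGroup.mk s)) (hx s)
  simp only [Representation.coeff_ofMulAction, MonoidAlgebra.coeff_ofCoeff, Finsupp.smul_apply, smul_eq_mul] at h
  rw [MulAction.Quotient.smul_mk] at h
  simpa [smul_eq_mul] using h.symm

lemma gx_eq (φ : G →* Rˣ) (H : Subgroup G) [Fintype (G ⧸ H)] (x : (G ⧸ H) →₀ R)
    (g : ((G ⧸ H) →₀ R) →ₗ[R] R)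
    (hx : ∀ s : G, ((Representation.ofMulAction R G (G ⧸ H)) s (MonoidAlgebra.ofCoeff x)).coeff = ((φ s : Rˣ) : R) • x)
    (hg : ∀ (s : G) (m : (G ⧸ H) →₀ R),
      g (((Representation.ofMulAction R G (G ⧸ H)) s (MonoidAlgebra.ofCoeff m)).coeff) = ((φ s : Rˣ) : R) * g m) :
    g x = (Fintype.card (G ⧸ H) : R) *
      (x (QuotientGroup.mk 1) * g (Finsupp.single (QuotientGroup.mk 1) 1)) := by
  have hrepr : x = ∑ a : G ⧸ H, Finsupp.single a (x a) := by
    ext b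
    simp [Finsupp.finset_sum_apply, Finsupp.single_apply]
  calc g x = ∑ a : G ⧸ H, x a * g (Finsupp.single a 1) := by
        conv_lhs => rw [hrepr]
        rw [map_sum]
        refine Finset.sum_congr rfl fun a _ => ?_
        have : Finsupp.single a (x a) = x a • Finsupp.single a (1 : R) := by
          rw [Finsupp.smul_single, smul_eq_mul, mul_one]
        rw [this, g.map_smul, smul_eq_mul]
    _ = ∑ _a : G ⧸ H,
          x (QuotientGroup.mk 1) * g (Finsupp.single (QuotientGroup.mk 1) 1) := by
        refine Finset.sum_congr rfl fun a _ => ?_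
        induction a using QuotientGroup.induction_on with
        | H s =>
          have h1 : Finsupp.single (QuotientGroup.mk s : G ⧸ H) (1 : R) =
              ((Representation.ofMulAction R G (G ⧸ H)) s
                (MonoidAlgebra.ofCoeff (Finsupp.single (QuotientGroup.mk 1) 1))).coeff := by
            rw [MonoidAlgebra.ofCoeff_single, Representation.ofMulAction_single, MonoidAlgebra.coeff_single, MulAction.Quotient.smul_mk]
            simp
          rw [h1, hg s, ← mul_assoc, mul_comm (x (QuotientGroup.mk s)), coeff_semiinv φ H x hx s]
    _ = (Fintype.card (G ⧸ H) : R) *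
          (x (QuotientGroup.mk 1) * g (Finsupp.single (QuotientGroup.mk 1) 1)) := by
        rw [Finset.sum_const, Finset.card_univ, nsmul_eq_mul]

end Helpers

/-- if `G` is a finite `p`-group and `R` is an integral domain in which `p`
is not invertible, then `R_φ` is a direct summand of a permutation `RG`-module if and
only if `φ` is trivial. -/
theorem stmt8 (R : Type*) [CommRing R] [IsDomain R] (G : Type*) [Group G] [Finite G]
    (p : ℕ) (hp : p.Prime) (hG : IsPGroup p G) (hnp : ¬ IsUnit ((p : ℕ) : R))
    (φ : G →* Rˣ) :
    IsPermSummand R G φ ↔ φ = 1 := by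
  haveI : Fact p.Prime := ⟨hp⟩
  constructor
  · intro hperm
    by_contra hφ
    obtain ⟨s₀, hs₀⟩ : ∃ s : G, φ s ≠ 1 := by
      by_contra h
      push_neg at h
      exact hφ (MonoidHom.ext fun s => h s)
    obtain ⟨n, Hs, x, g, hx, hg, hsum⟩ := hperm
    have key : ∀ i, ∃ r : R, g i (x i) = (p : R) * r := by
      intro i
      letI : Fintype (G ⧸ Hs i) := Fintype.ofFinite _
      have hgx := gx_eq φ (Hs i) (x i) (g i) (hx i) (hg i)
      by_cases hc : x i (QuotientGroup.mk 1) = 0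
      · exact ⟨0, by rw [hgx, hc, zero_mul, mul_zero, mul_zero]⟩
      · -- all of `Hs i` maps to 1 under φ
        have htriv : ∀ h ∈ Hs i, φ h = 1 := by
          intro h hh
          have hmk : (QuotientGroup.mk h : G ⧸ Hs i) = QuotientGroup.mk 1 :=
            (QuotientGroup.eq).mpr (by simpa using (Hs i).inv_mem hh)
          have := coeff_semiinv φ (Hs i) (x i) (hx i) h
          rw [hmk] at this
          have h2 : (((φ h : Rˣ) : R) - 1) * x i (QuotientGroup.mk 1) = 0 := by
            rw [sub_mul, one_mul, this, sub_self]
          rcases mul_eq_zero.mp h2 with h3 | h3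
          · have h4 : ((φ h : Rˣ) : R) = 1 := by linear_combination h3
            ext
            rw [h4, Units.val_one]
          · exact absurd h3 hc
        have hne : Hs i ≠ ⊤ := by
          intro htop
          exact hs₀ (htriv s₀ (htop ▸ Subgroup.mem_top s₀))
        haveI : (Hs i).FiniteIndex := ⟨Subgroup.index_ne_zero_of_finite⟩
        obtain ⟨m, hm⟩ := hG.index (Hs i)
        have hm0 : m ≠ 0 := by
          rintro rfl
          exact hne (Subgroup.index_eq_one.mp (by simpa using hm))
        have hdvd : p ∣ Fintype.card (G ⧸ Hs i) := by
          have hcard : Nat.card (G ⧸ Hs i) = p ^ m := hm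
          rw [← Nat.card_eq_fintype_card, hcard]
          exact dvd_pow_self p hm0
        obtain ⟨k, hk⟩ := hdvd
        refine ⟨(k : R) * (x i (QuotientGroup.mk 1) *
          g i (Finsupp.single (QuotientGroup.mk 1) 1)), ?_⟩
        rw [hgx, hk]
        push_cast
        ring
    choose r hr using key
    have : (1 : R) = (p : R) * ∑ i, r i := by
      rw [← hsum, Finset.mul_sum]
      exact Finset.sum_congr rfl fun i _ => hr i
    exact hnp (IsUnit.of_mul_eq_one _ this.symm)
  · intro h1
    haveI : Subsingleton (G ⧸ (⊤ : Subgroup G)) := QuotientGroup.subsingleton_quotient_top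
    refine ⟨1, fun _ => ⊤, fun _ => Finsupp.single (QuotientGroup.mk 1) 1,
      fun _ => Finsupp.lapply (QuotientGroup.mk 1), ?_, ?_, ?_⟩
    · intro i s
      rw [MonoidAlgebra.ofCoeff_single, Representation.ofMulAction_single, h1]
      simp only [MonoidHom.one_apply, Units.val_one, one_smul, MonoidAlgebra.coeff_single]
      congr 1
      exact Subsingleton.elim _ _
    · intro i s m
      rw [h1]
      simp only [MonoidHom.one_apply, Units.val_one, one_mul, Finsupp.lapply_apply,
        Representation.coeff_ofMulAction, MonoidAlgebra.coeff_ofCoeff]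
      congr 1
      exact Subsingleton.elim _ _
    · simp [Finsupp.lapply_apply]
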